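/- For p ∈ [0,1]^n and q = 1−p, with P = Ber(p) and Q = Ber(q), Σ_{ω∈{0,1}^n} min{P(ω), Q(ω)} ≥ (∏_{i=1}^n 2√(p_i q_i)) · exp(−(1/2)·(Σ_{i=1}^n (log(p_i/q_i))²)^{1/2}). -/

import Mathlib

open Finset

private lemma sqrt_mul_exp_half_log (x y : ℝ) (hx : 0 < x) (hy : 0 < y) :
    Real.sqrt (x * y) * Real.exp (Real.log (x / y) / 2) = x := by
  have h1 : Real.exp (Real.log (x / y) / 2) = Real.sqrt (x / y) := by
    rw [Real.sqrt_eq_rpow, Real.rpow_def_of_pos (div_pos hx hy)]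
    ring_nf
  rw [h1, ← Real.sqrt_mul (by positivity)]
  have : x * y * (x / y) = x ^ 2 := by field_simp
  rw [this, Real.sqrt_sq hx.le]

private lemma min_eq_sqrt_exp (x y : ℝ) (hx : 0 < x) (hy : 0 < y) :
    min x y = Real.sqrt (x * y) * Real.exp (-|Real.log (x / y)| / 2) := by
  have hyx : Real.log (y / x) = -Real.log (x / y) := by
    rw [← Real.log_inv, inv_div]
  have h1 := sqrt_mul_exp_half_log x y hx hy
  have h2 := sqrt_mul_exp_half_log y x hy hx
  rw [mul_comm y x] at h2
  rw [hyx] at h2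
  rcases le_total x y with h | h
  · have ht : Real.log (x / y) ≤ 0 :=
      Real.log_nonpos (by positivity) ((div_le_one hy).2 h)
    rw [min_eq_left h, abs_of_nonpos ht, neg_neg, h1]
  · have ht : 0 ≤ Real.log (x / y) :=
      Real.log_nonneg ((one_le_div hy).2 h)
    rw [min_eq_right h, abs_of_nonneg ht, h2]

private lemma sqrt_prod' {α : Type*} (s : Finset α) (f : α → ℝ) (hf : ∀ i ∈ s, 0 ≤ f i) :
    Real.sqrt (∏ i ∈ s, f i) = ∏ i ∈ s, Real.sqrt (f i) := by
  induction s using Finset.cons_induction with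
  | empty => simp
  | cons a s ha ih =>
    rw [Finset.prod_cons, Finset.prod_cons,
      Real.sqrt_mul (hf a (Finset.mem_cons_self a s)),
      ih fun i hi => hf i (Finset.mem_cons_of_mem hi)]

private lemma sum_sq_signed (n : ℕ) (a : Fin n → ℝ) :
    ∑ ω : Fin n → Bool, (∑ i, if ω i then a i else -a i) ^ 2
      = 2 ^ n * ∑ i, (a i) ^ 2 := by
  induction n with
  | zero => simp
  | succ n ih =>
    have heq := Fintype.sum_equiv (Fin.consEquiv fun _ : Fin (n+1) => Bool)
      (fun y : Bool × (Fin n → Bool) =>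
        (∑ i, if Fin.cons (α := fun _ => Bool) y.1 y.2 i then a i else -a i) ^ 2)
      (fun ω : Fin (n+1) → Bool => (∑ i, if ω i then a i else -a i) ^ 2)
      (fun y => rfl)
    rw [← heq, Fintype.sum_prod_type]
    have key : ∀ (b : Bool) (ω : Fin n → Bool),
        (∑ i, if Fin.cons (α := fun _ => Bool) b ω i then a i else -a i)
          = (if b then a 0 else -a 0) + ∑ i : Fin n, (if ω i then a i.succ else -a i.succ) := by
      intro b ω
      rw [Fin.sum_univ_succ]
      simp [Fin.cons_succ]
    simp only [key]
    rw [Fintype.sum_bool]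
    have ih' := ih (fun i => a i.succ)
    rw [← Finset.sum_add_distrib]
    have hring : ∀ ω : Fin n → Bool,
        ((if (true:Bool) then a 0 else -a 0) + ∑ i : Fin n, (if ω i then a i.succ else -a i.succ)) ^ 2
        + ((if (false:Bool) then a 0 else -a 0) + ∑ i : Fin n, (if ω i then a i.succ else -a i.succ)) ^ 2
        = 2 * a 0 ^ 2 + 2 * (∑ i : Fin n, (if ω i then a i.succ else -a i.succ)) ^ 2 := by
      intro ω; simp only [if_true, Bool.false_eq_true, if_false]; ring
    rw [Finset.sum_congr rfl (fun ω _ => hring ω), Finset.sum_add_distrib,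
      Finset.sum_const, ← Finset.mul_sum, ih']
    have hcard : (Finset.univ : Finset (Fin n → Bool)).card = 2 ^ n := by
      simp [Fintype.card_fun]
    rw [hcard, Fin.sum_univ_succ]
    ring

private lemma card_mul_exp_avg_le {α : Type*} [Fintype α] (t : α → ℝ) :
    (Fintype.card α : ℝ) * Real.exp ((∑ x, t x) / Fintype.card α) ≤ ∑ x, Real.exp (t x) := by
  rcases isEmpty_or_nonempty α with h | h
  · simp
  have hN : (0:ℝ) < Fintype.card α := by positivity
  have h1 : ∑ _x : α, (1 / (Fintype.card α : ℝ)) = 1 := by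
    rw [Finset.sum_const, Finset.card_univ, nsmul_eq_mul]
    field_simp
  have hj := convexOn_exp.map_sum_le (t := (univ : Finset α))
    (w := fun _ => 1 / (Fintype.card α : ℝ)) (p := t)
    (fun _ _ => by positivity) h1 (fun _ _ => Set.mem_univ _)
  simp only [smul_eq_mul] at hj
  rw [← Finset.mul_sum] at hj
  calc (Fintype.card α : ℝ) * Real.exp ((∑ x, t x) / Fintype.card α)
      = (Fintype.card α : ℝ) * Real.exp (1 / (Fintype.card α:ℝ) * ∑ x, t x) := by
        rw [div_eq_mul_inv, one_div, mul_comm ((Fintype.card α : ℝ))⁻¹]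
    _ ≤ (Fintype.card α : ℝ) * ∑ x, 1 / (Fintype.card α:ℝ) * Real.exp (t x) :=
        mul_le_mul_of_nonneg_left hj hN.le
    _ = ∑ x, Real.exp (t x) := by
        rw [← Finset.mul_sum]; field_simp

/-- Product Bernoulli distribution on `{0,1}^n` with parameters `p`. -/
def berProd {n : ℕ} (p : Fin n → ℝ) : (Fin n → Bool) → ℝ :=
  fun ω => ∏ i, if ω i then p i else 1 - p i

theorem min_sum_lower_bound {n : ℕ} (p q : Fin n → ℝ)
    (hp : ∀ i, p i ∈ Set.Ioo (0:ℝ) 1) (hq : ∀ i, q i = 1 - p i) :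
    ∑ ω : Fin n → Bool, min (berProd p ω) (berProd q ω)
      ≥ (∏ i, 2 * Real.sqrt (p i * q i)) *
        Real.exp (-(1/2) * Real.sqrt (∑ i, (Real.log (p i / q i))^2)) := by
  have hp0 : ∀ i, 0 < p i := fun i => (hp i).1
  have hq0 : ∀ i, 0 < q i := fun i => by rw [hq i]; linarith [(hp i).2]
  set a : Fin n → ℝ := fun i => Real.log (p i / q i) with ha
  set L : (Fin n → Bool) → ℝ := fun ω => ∑ i, if ω i then a i else -a i with hL
  set c : ℝ := ∏ i, Real.sqrt (p i * q i) with hc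
  have hc0 : (0:ℝ) ≤ c := Finset.prod_nonneg fun i _ => Real.sqrt_nonneg _
  have hN : (0:ℝ) < 2 ^ n := by positivity
  -- Step A : pointwise formula for the min
  have stepA : ∀ ω : Fin n → Bool,
      min (berProd p ω) (berProd q ω) = c * Real.exp (-|L ω| / 2) := by
    intro ω
    have hPpos : 0 < berProd p ω := Finset.prod_pos fun i _ => by
      cases h : ω i <;> simp only [h, Bool.false_eq_true, if_false, if_true]
      · linarith [(hp i).2]
      · exact hp0 i
    have hQpos : 0 < berProd q ω := Finset.prod_pos fun i _ => by
      cases h : ω i <;> simp only [h, Bool.false_eq_true, if_false, if_true]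
      · have := hp0 i
        rw [hq i]; linarith
      · exact hq0 i
    have hmul : berProd p ω * berProd q ω = ∏ i, (p i * q i) := by
      rw [berProd, berProd, ← Finset.prod_mul_distrib]
      refine Finset.prod_congr rfl fun i _ => ?_
      cases h : ω i
      · simp only [Bool.false_eq_true, if_false]
        rw [hq i]; ring
      · simp [h]
    have hsqrt : Real.sqrt (berProd p ω * berProd q ω) = c := by
      rw [hmul, hc, sqrt_prod' _ _ fun i _ => mul_nonneg (hp0 i).le (hq0 i).le]
    have hlog : Real.log (berProd p ω / berProd q ω) = L ω := by
      rw [berProd, berProd, ← Finset.prod_div_distrib,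
        Real.log_prod (fun i _ => by
          cases h : ω i <;> simp only [h, Bool.false_eq_true, if_false, if_true]
          · have h1 : (1:ℝ) - p i = q i := (hq i).symm
            have h2 : (1:ℝ) - q i = p i := by rw [hq i]; ring
            rw [h1, h2]
            exact ne_of_gt (div_pos (hq0 i) (hp0 i))
          · exact ne_of_gt (div_pos (hp0 i) (hq0 i)))]
      refine Finset.sum_congr rfl fun i _ => ?_
      cases h : ω i
      · simp only [h, Bool.false_eq_true, if_false]
        have h1 : (1:ℝ) - p i = q i := (hq i).symm
        have h2 : (1:ℝ) - q i = p i := by rw [hq i]; ring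
        rw [h1, h2, ← Real.log_inv, inv_div]
      · simp [h, ha]
    rw [min_eq_sqrt_exp _ _ hPpos hQpos, hsqrt, hlog]
  -- rewrite the LHS
  rw [Finset.sum_congr rfl fun ω _ => stepA ω, ← Finset.mul_sum]
  -- Jensen
  have hcard : ((Fintype.card (Fin n → Bool)) : ℝ) = 2 ^ n := by
    simp [Fintype.card_fun]
  have jensen := card_mul_exp_avg_le (fun ω : Fin n → Bool => -|L ω| / 2)
  rw [hcard] at jensen
  -- Cauchy-Schwarz + the variance identity
  have hsumnn : (0:ℝ) ≤ ∑ i, a i ^ 2 := Finset.sum_nonneg fun i _ => sq_nonneg _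
  have hD : ∑ ω : Fin n → Bool, |L ω| ≤ (2 ^ n : ℝ) * Real.sqrt (∑ i, a i ^ 2) := by
    have h1 := sq_sum_le_card_mul_sum_sq (s := (univ : Finset (Fin n → Bool)))
      (f := fun ω => |L ω|)
    simp only [sq_abs] at h1
    rw [Finset.card_univ, hcard] at h1
    have h2 : ∑ ω : Fin n → Bool, (L ω) ^ 2 = 2 ^ n * ∑ i, a i ^ 2 := sum_sq_signed n a
    rw [h2] at h1
    have h3 : (0:ℝ) ≤ ∑ ω : Fin n → Bool, |L ω| :=
      Finset.sum_nonneg fun _ _ => abs_nonneg _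
    calc ∑ ω : Fin n → Bool, |L ω|
        = Real.sqrt ((∑ ω : Fin n → Bool, |L ω|) ^ 2) := (Real.sqrt_sq h3).symm
      _ ≤ Real.sqrt (((2:ℝ) ^ n) ^ 2 * ∑ i, a i ^ 2) := by
          apply Real.sqrt_le_sqrt
          calc (∑ ω : Fin n → Bool, |L ω|) ^ 2
              ≤ 2 ^ n * (2 ^ n * ∑ i, a i ^ 2) := h1
            _ = ((2:ℝ) ^ n) ^ 2 * ∑ i, a i ^ 2 := by ring
      _ = (2 ^ n : ℝ) * Real.sqrt (∑ i, a i ^ 2) := by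
          rw [Real.sqrt_mul (by positivity), Real.sqrt_sq hN.le]
  -- conclude
  have hexp : Real.exp (-(1/2) * Real.sqrt (∑ i, a i ^ 2))
      ≤ Real.exp ((∑ ω : Fin n → Bool, (-|L ω| / 2)) / (2 ^ n : ℝ)) := by
    apply Real.exp_le_exp.2
    have hsum : ∑ ω : Fin n → Bool, (-|L ω| / 2) = -(∑ ω : Fin n → Bool, |L ω|) / 2 := by
      rw [← Finset.sum_neg_distrib, ← Finset.sum_div]
    rw [hsum, div_div, neg_div, neg_mul, neg_le_neg_iff,
      div_le_iff₀ (by positivity : (0:ℝ) < 2 * 2 ^ n)]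
    calc ∑ ω : Fin n → Bool, |L ω|
        ≤ (2 ^ n : ℝ) * Real.sqrt (∑ i, a i ^ 2) := hD
      _ = 1 / 2 * Real.sqrt (∑ i, a i ^ 2) * (2 * 2 ^ n) := by ring
  rw [ge_iff_le,
    show (∑ i, (Real.log (p i / q i)) ^ 2) = ∑ i, a i ^ 2 by simp [ha]]
  calc (∏ i, 2 * Real.sqrt (p i * q i)) *
        Real.exp (-(1/2) * Real.sqrt (∑ i, a i ^ 2))
      = c * ((2:ℝ) ^ n * Real.exp (-(1/2) * Real.sqrt (∑ i, a i ^ 2))) := by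
        rw [Finset.prod_mul_distrib, Finset.prod_const, Finset.card_univ,
          Fintype.card_fin, ← hc]
        ring
    _ ≤ c * ((2:ℝ) ^ n *
          Real.exp ((∑ ω : Fin n → Bool, (-|L ω| / 2)) / (2 ^ n : ℝ))) := by
        apply mul_le_mul_of_nonneg_left _ hc0
        exact mul_le_mul_of_nonneg_left hexp hN.le
    _ ≤ c * ∑ ω : Fin n → Bool, Real.exp (-|L ω| / 2) :=
        mul_le_mul_of_nonneg_left jensen hc0
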